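/- Let B be the APC iteration matrix and let μ_1,…,μ_n be the eigenvalues (with multiplicity) of the real symmetric matrix X. Then for every λ ∈ ℂ, det(B − λ I_{(m+1)n}) = (1 − γ − λ)^{(m−1)n} · ∏_{i=1}^n (λ² + (γ + η − 2 − ηγ(1−μ_i)) λ + (γ−1)(η−1)), where the determinant is taken over ℂ after mapping the real matrix B into ℂ. -/

import Mathlib

open Matrix Polynomial

section Aux
variable {n m : ℕ}

lemma aux_det_eig {n : ℕ} (X : Matrix (Fin n) (Fin n) ℝ) (hXh : X.IsHermitian) (a b : ℂ) :
    (a • (1 : Matrix (Fin n) (Fin n) ℂ) + b • X.map (algebraMap ℝ ℂ)).det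
      = ∏ i, (a + b * (hXh.eigenvalues i : ℂ)) := by
  classical
  set f := algebraMap ℝ ℂ with hf
  set U : Matrix (Fin n) (Fin n) ℝ := (hXh.eigenvectorUnitary : Matrix (Fin n) (Fin n) ℝ) with hU
  have hUU : U * star U = 1 := Matrix.mem_unitaryGroup_iff.mp hXh.eigenvectorUnitary.2
  have hmapX : X.map f = U.map f * (diagonal fun i => (hXh.eigenvalues i : ℂ)) * (star U).map f := by
    have h1 := congrArg (fun Y => Matrix.map Y f) hXh.spectral_theorem
    simp only [Unitary.conjStarAlgAut_apply] at h1
    rw [h1, Matrix.map_mul, Matrix.map_mul, Matrix.diagonal_map (by simp)]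
    rfl
  have hUUc : U.map f * (star U).map f = 1 := by
    rw [← Matrix.map_mul, hUU, Matrix.map_one f (map_zero f) (map_one f)]
  have hdiag : (diagonal fun i => a + b * (hXh.eigenvalues i : ℂ))
      = a • (1 : Matrix (Fin n) (Fin n) ℂ) + b • (diagonal fun i => (hXh.eigenvalues i : ℂ)) := by
    ext i j
    rcases eq_or_ne i j with rfl | h
    · simp [Matrix.diagonal_apply_eq, Matrix.one_apply_eq]
    · simp [Matrix.diagonal_apply_ne _ h, Matrix.one_apply_ne h]
  have key : a • (1 : Matrix (Fin n) (Fin n) ℂ) + b • X.map f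
      = U.map f * (diagonal fun i => a + b * (hXh.eigenvalues i : ℂ)) * (star U).map f := by
    rw [hdiag, Matrix.mul_add, Matrix.add_mul, Matrix.mul_smul, Matrix.smul_mul, Matrix.mul_one,
      hUUc, Matrix.mul_smul, Matrix.smul_mul, hmapX]
  have hdet1 : (U.map f).det * ((star U).map f).det = 1 := by
    rw [← det_mul, hUUc, det_one]
  rw [key, det_mul, det_mul, mul_right_comm, hdet1, one_mul, det_diagonal]

lemma aux_fromBlocks_sub {l o l' o' : Type*} {R : Type*} [SubtractionMonoid R]
    (A A' : Matrix l l' R) (B B' : Matrix l o' R) (C C' : Matrix o l' R) (D D' : Matrix o o' R) :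
    fromBlocks A B C D - fromBlocks A' B' C' D'
      = fromBlocks (A - A') (B - B') (C - C') (D - D') := by
  ext (i | i) (j | j) <;> simp [fromBlocks]

lemma aux_map_smul {I J : Type*} (c : ℝ) (N : Matrix I J ℝ) :
    (c • N).map (algebraMap ℝ ℂ) = (c : ℂ) • N.map (algebraMap ℝ ℂ) := by
  ext i j; simp [Matrix.map_apply]

lemma aux_map_sum {I J : Type*} {s : Finset (Fin m)} (N : Fin m → Matrix I J ℝ) :
    (∑ i ∈ s, N i).map (algebraMap ℝ ℂ) = ∑ i ∈ s, (N i).map (algebraMap ℝ ℂ) := by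
  ext i j; simp [Matrix.map_apply, Matrix.sum_apply]

end Aux

theorem apc_iteration_matrix_char_det
    {n p m : ℕ} (hm : 1 ≤ m)
    (A : Fin m → Matrix (Fin p) (Fin n) ℝ)
    (hfr : ∀ i, Invertible (A i * (A i)ᵀ))
    (γ η : ℝ)
    (P : Fin m → Matrix (Fin n) (Fin n) ℝ)
    (hP : ∀ i, P i = 1 - (A i)ᵀ * (A i * (A i)ᵀ)⁻¹ * A i)
    (X : Matrix (Fin n) (Fin n) ℝ)
    (hX : X = ((m : ℝ))⁻¹ • ∑ i, (A i)ᵀ * (A i * (A i)ᵀ)⁻¹ * A i)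
    (hXh : X.IsHermitian)
    (M : Matrix (Fin n) (Fin n) ℝ)
    (hM : M = (η * γ / m) • ∑ i, P i + (1 - η) • (1 : Matrix (Fin n) (Fin n) ℝ))
    (B : Matrix (Fin m × Fin n ⊕ Fin n) (Fin m × Fin n ⊕ Fin n) ℝ)
    (hB : B = Matrix.fromBlocks
        ((1 - γ) • (1 : Matrix (Fin m × Fin n) (Fin m × Fin n) ℝ))
        (fun q j => γ * P q.1 q.2 j)
        (fun j q => (η * (1 - γ) / m) * (1 : Matrix (Fin n) (Fin n) ℝ) j q.2)
        M) :
    ∀ lam : ℂ,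
      (B.map (algebraMap ℝ ℂ) - lam • 1).det
        = (1 - (γ : ℂ) - lam) ^ ((m - 1) * n)
          * ∏ i : Fin n,
              (lam ^ 2
                + ((γ : ℂ) + (η : ℂ) - 2 - (η : ℂ) * (γ : ℂ) * (1 - (hXh.eigenvalues i : ℂ))) * lam
                + ((γ : ℂ) - 1) * ((η : ℂ) - 1)) := by
  classical
  have hm0 : (m : ℂ) ≠ 0 := Nat.cast_ne_zero.mpr (by omega)
  have hm0' : (m : ℝ) ≠ 0 := Nat.cast_ne_zero.mpr (by omega)
  set f := algebraMap ℝ ℂ with hf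
  set g : ℂ := (γ : ℂ) with hg
  set e : ℂ := (η : ℂ) with he
  set Xc := X.map f with hXc
  -- sum of projections
  have hsumP : ∑ i, P i = (m : ℝ) • (1 : Matrix (Fin n) (Fin n) ℝ) - (m : ℝ) • X := by
    have hQ : ∑ i, (A i)ᵀ * (A i * (A i)ᵀ)⁻¹ * A i = (m : ℝ) • X := by
      rw [hX, smul_smul, mul_inv_cancel₀ hm0', one_smul]
    calc ∑ i, P i
        = ∑ _i : Fin m, (1 : Matrix (Fin n) (Fin n) ℝ)
            - ∑ i, (A i)ᵀ * (A i * (A i)ᵀ)⁻¹ * A i := by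
          rw [← Finset.sum_sub_distrib]
          exact Finset.sum_congr rfl fun i _ => hP i
      _ = (m : ℝ) • 1 - (m : ℝ) • X := by
          rw [hQ, Finset.sum_const, Finset.card_univ, Fintype.card_fin]
          congr 1
          ext i j
          rcases eq_or_ne i j with rfl | hij
          · simp
          · simp [Matrix.one_apply_ne hij, hij]
  have hsumPc : ∑ i, (P i).map f
      = (m : ℂ) • ((1 : Matrix (Fin n) (Fin n) ℂ) - Xc) := by
    rw [← aux_map_sum, hsumP]
    ext i j
    simp [hXc, hf, Matrix.map_apply, Matrix.one_apply, apply_ite, Matrix.smul_apply,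
      Matrix.sub_apply, mul_sub, mul_ite, mul_one, mul_zero]
  -- M over ℂ
  have hMc : M.map f = (e * g) • ((1 : Matrix (Fin n) (Fin n) ℂ) - Xc) + (1 - e) • 1 := by
    rw [hM]
    have h1 : ((η * γ / m) • ∑ i, P i).map f
        = (e * g) • ((1 : Matrix (Fin n) (Fin n) ℂ) - Xc) := by
      rw [aux_map_smul, aux_map_sum, hsumPc, smul_smul]
      congr 1
      push_cast
      field_simp
      rfl
    have h2 : (((1 - η) • (1 : Matrix (Fin n) (Fin n) ℝ))).map f
        = (1 - e) • (1 : Matrix (Fin n) (Fin n) ℂ) := by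
      rw [aux_map_smul]
      congr 1
      · push_cast; ring
      · ext i j; simp [Matrix.map_apply, Matrix.one_apply, apply_ite]
    calc ((η * γ / m) • ∑ i, P i + (1 - η) • (1 : Matrix (Fin n) (Fin n) ℝ)).map f
        = ((η * γ / m) • ∑ i, P i).map f
            + ((1 - η) • (1 : Matrix (Fin n) (Fin n) ℝ)).map f := by
          ext i j; simp [Matrix.map_apply, Matrix.add_apply]
      _ = _ := by rw [h1, h2]
  -- main determinant computation away from t = 1 - g
  have heq : ∀ t : ℂ, t ≠ 1 - g →
      (B.map f - t • 1).det
        = (1 - g - t) ^ ((m - 1) * n)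
          * ∏ i : Fin n, (t ^ 2 + (g + e - 2 - e * g * (1 - (hXh.eigenvalues i : ℂ))) * t
              + (g - 1) * (e - 1)) := by
    intro t ht
    have ha : (1 - g - t) ≠ 0 := fun h => ht (by linear_combination -h)
    set a : ℂ := 1 - g - t with haa
    have hBsplit : B.map f - t • 1 = fromBlocks
        (a • (1 : Matrix (Fin m × Fin n) (Fin m × Fin n) ℂ))
        (Matrix.map (fun q j => γ * P q.1 q.2 j : Matrix (Fin m × Fin n) (Fin n) ℝ) f)
        (Matrix.map (fun j q => (η * (1 - γ) / m) * (1 : Matrix (Fin n) (Fin n) ℝ) j q.2 :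
          Matrix (Fin n) (Fin m × Fin n) ℝ) f)
        (M.map f - t • 1) := by
      rw [hB]
      erw [fromBlocks_map]
      rw [← fromBlocks_one (l := Fin m × Fin n) (m := Fin n) (α := ℂ), fromBlocks_smul,
        aux_fromBlocks_sub]
      have hA : ((1 - γ) • (1 : Matrix (Fin m × Fin n) (Fin m × Fin n) ℝ)).map f - t • 1
          = a • (1 : Matrix (Fin m × Fin n) (Fin m × Fin n) ℂ) := by
        rw [aux_map_smul]
        have h3 : ((1 - γ : ℝ) : ℂ) = 1 - g := by push_cast; ring
        have hone : ((1 : Matrix (Fin m × Fin n) (Fin m × Fin n) ℝ)).map f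
            = (1 : Matrix (Fin m × Fin n) (Fin m × Fin n) ℂ) := by
          ext i j; simp [Matrix.map_apply, Matrix.one_apply, apply_ite]
        rw [hone, h3, haa]
        module
      simp only [smul_zero, sub_zero]
      rw [hA]
    rw [hBsplit]
    haveI hinv : Invertible (a • (1 : Matrix (Fin m × Fin n) (Fin m × Fin n) ℂ)) :=
      ⟨a⁻¹ • 1, by simp [Matrix.smul_mul, Matrix.mul_smul, smul_smul,
          inv_mul_cancel₀ ha, mul_inv_cancel₀ ha],
        by simp [Matrix.smul_mul, Matrix.mul_smul, smul_smul,
          inv_mul_cancel₀ ha, mul_inv_cancel₀ ha]⟩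
    rw [Matrix.det_fromBlocks₁₁]
    have hinvof : ⅟(a • (1 : Matrix (Fin m × Fin n) (Fin m × Fin n) ℂ)) = a⁻¹ • 1 :=
      invOf_eq_right_inv (by simp [Matrix.smul_mul, Matrix.mul_smul, smul_smul,
        inv_mul_cancel₀ ha, mul_inv_cancel₀ ha])
    rw [hinvof]
    -- product of off-diagonal blocks
    have hCB0 : (Matrix.map (fun j q => (η * (1 - γ) / m) * (1 : Matrix (Fin n) (Fin n) ℝ) j q.2 :
          Matrix (Fin n) (Fin m × Fin n) ℝ) f)
          * (Matrix.map (fun q j => γ * P q.1 q.2 j : Matrix (Fin m × Fin n) (Fin n) ℝ) f)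
        = (e * (1 - g) * g / (m : ℂ)) • ∑ i, (P i).map f := by
      ext j j'
      simp only [Matrix.mul_apply, Matrix.map, Matrix.of_apply, Fintype.sum_prod_type,
        Matrix.one_apply, apply_ite, _root_.map_mul, map_div₀, map_natCast, _root_.map_sub,
        _root_.map_one, _root_.map_zero, mul_ite, ite_mul, mul_zero, zero_mul,
        Finset.sum_ite_eq, Finset.mem_univ, if_true,
        Matrix.smul_apply, Matrix.sum_apply, smul_eq_mul]
      rw [Finset.mul_sum]
      refine Finset.sum_congr rfl fun i _ => ?_
      simp only [hf, Complex.coe_algebraMap, hg, he]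
      ring
    have hCB : (Matrix.map (fun j q => (η * (1 - γ) / m) * (1 : Matrix (Fin n) (Fin n) ℝ) j q.2 :
          Matrix (Fin n) (Fin m × Fin n) ℝ) f)
          * (a⁻¹ • (1 : Matrix (Fin m × Fin n) (Fin m × Fin n) ℂ))
          * (Matrix.map (fun q j => γ * P q.1 q.2 j : Matrix (Fin m × Fin n) (Fin n) ℝ) f)
        = (a⁻¹ * (e * (1 - g) * g)) • ((1 : Matrix (Fin n) (Fin n) ℂ) - Xc) := by
      rw [Matrix.mul_smul, Matrix.mul_one, Matrix.smul_mul, hCB0, hsumPc, smul_smul, smul_smul]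
      congr 1
      field_simp
    rw [hCB, hMc]
    -- determinant of the top-left block
    have hdetA : (a • (1 : Matrix (Fin m × Fin n) (Fin m × Fin n) ℂ)).det = a ^ (m * n) := by
      rw [det_smul, det_one, mul_one, Fintype.card_prod, Fintype.card_fin, Fintype.card_fin]
    have hmn : m * n = (m - 1) * n + n := by
      cases m with
      | zero => omega
      | succ k => simp [Nat.succ_mul]
    -- the Schur complement
    set b : ℂ := (1 - e - t) * a - t * e * g with hb
    set c : ℂ := t * e * g with hc
    have hSform : a • ((e * g) • ((1 : Matrix (Fin n) (Fin n) ℂ) - Xc) + (1 - e) • 1 - t • 1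
          - (a⁻¹ * (e * (1 - g) * g)) • ((1 : Matrix (Fin n) (Fin n) ℂ) - Xc))
        = b • (1 : Matrix (Fin n) (Fin n) ℂ) + c • Xc := by
      rw [hb, hc, haa]
      match_scalars
      · field_simp
        ring
      · field_simp
        ring
    calc (a • (1 : Matrix (Fin m × Fin n) (Fin m × Fin n) ℂ)).det
          * ((e * g) • ((1 : Matrix (Fin n) (Fin n) ℂ) - Xc) + (1 - e) • 1 - t • 1
            - (a⁻¹ * (e * (1 - g) * g)) • ((1 : Matrix (Fin n) (Fin n) ℂ) - Xc)).det
        = a ^ ((m - 1) * n) * (a ^ n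
            * ((e * g) • ((1 : Matrix (Fin n) (Fin n) ℂ) - Xc) + (1 - e) • 1 - t • 1
              - (a⁻¹ * (e * (1 - g) * g)) • ((1 : Matrix (Fin n) (Fin n) ℂ) - Xc)).det) := by
          rw [hdetA, hmn, pow_add]; ring
      _ = a ^ ((m - 1) * n) * (b • (1 : Matrix (Fin n) (Fin n) ℂ) + c • Xc).det := by
          rw [← hSform, det_smul, Fintype.card_fin]
      _ = a ^ ((m - 1) * n) * ∏ i : Fin n, (b + c * (hXh.eigenvalues i : ℂ)) := by
          rw [hXc, aux_det_eig X hXh b c]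
      _ = _ := by
          congr 1
          refine Finset.prod_congr rfl fun i _ => ?_
          rw [hb, hc, haa]
          ring
  -- polynomial argument to cover t = 1 - g
  intro lam
  set q : Polynomial ℂ := (Polynomial.C (1 - g) - Polynomial.X) ^ ((m - 1) * n)
      * ∏ i : Fin n, ((Polynomial.X : Polynomial ℂ) ^ 2
          + Polynomial.C (g + e - 2 - e * g * (1 - (hXh.eigenvalues i : ℂ))) * Polynomial.X
          + Polynomial.C ((g - 1) * (e - 1))) with hq'
  set pp : Polynomial ℂ := ((B.map f).map Polynomial.C
      - (Polynomial.X : Polynomial ℂ) • 1).det with hp'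
  have hp : ∀ t : ℂ, pp.eval t = (B.map f - t • 1).det := by
    intro t
    have h1 := (Polynomial.evalRingHom t).map_det
      ((B.map f).map Polynomial.C - (Polynomial.X : Polynomial ℂ) • 1)
    rw [hp']
    rw [show Polynomial.eval t pp = (Polynomial.evalRingHom t) pp from rfl, hp', h1]
    congr 1
    ext i j
    rcases eq_or_ne i j with rfl | hij
    · simp [Matrix.map_apply, Matrix.sub_apply, Matrix.smul_apply, Matrix.one_apply_eq]
    · simp [Matrix.map_apply, Matrix.sub_apply, Matrix.smul_apply, Matrix.one_apply_ne hij]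
  have hq : ∀ t : ℂ, q.eval t = (1 - g - t) ^ ((m - 1) * n)
      * ∏ i : Fin n, (t ^ 2 + (g + e - 2 - e * g * (1 - (hXh.eigenvalues i : ℂ))) * t
          + (g - 1) * (e - 1)) := by
    intro t
    simp [hq', Polynomial.eval_prod]
  have hpq : pp = q := by
    have hsub : {t : ℂ | t ≠ 1 - g} ⊆ {t : ℂ | (pp - q).IsRoot t} := by
      intro t htt
      simp only [Set.mem_setOf_eq, Polynomial.IsRoot, Polynomial.eval_sub]
      rw [hp t, hq t, heq t htt, sub_self]
    have hinf : {t : ℂ | t ≠ 1 - g}.Infinite := by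
      have : {t : ℂ | t ≠ 1 - g} = {(1 - g : ℂ)}ᶜ := by ext t; simp [Set.mem_compl_iff]
      rw [this]
      exact (Set.finite_singleton _).infinite_compl
    have h0 : pp - q = 0 := Polynomial.eq_zero_of_infinite_isRoot _ (hinf.mono hsub)
    exact sub_eq_zero.mp h0
  rw [← hp lam, hpq, hq lam]
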